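/- Let G be a connected non-transmission-regular graph of order n with n even. Then D_max(G) − λ₁(G) ≥ (n+2−√(n²+4n−4))/2, with equality if and only if G is an (n−4)-DVDR graph. -/

import Mathlib

open SimpleGraph Matrix Finset BigOperators

/-- The distance matrix of a graph on `Fin n`, with real entries `d(u,v)`. -/
noncomputable def distMatrix {n : ℕ} (G : SimpleGraph (Fin n)) : Matrix (Fin n) (Fin n) ℝ :=
  fun u v => (G.dist u v : ℝ)

lemma distMatrix_isHermitian {n : ℕ} (G : SimpleGraph (Fin n)) :
    (distMatrix G).IsHermitian := by
  unfold Matrix.IsHermitian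
  ext u v
  simp [distMatrix, Matrix.conjTranspose_apply, SimpleGraph.dist_comm]

/-- The distance spectral radius: the largest eigenvalue of the distance matrix. -/
noncomputable def lambda1 {n : ℕ} (G : SimpleGraph (Fin n)) : ℝ :=
  ⨆ i, (distMatrix_isHermitian G).eigenvalues i

/-- The transmission of a vertex: the sum of distances to all other vertices. -/
noncomputable def transmission {n : ℕ} (G : SimpleGraph (Fin n)) (v : Fin n) : ℕ :=
  ∑ u, G.dist v u

/-- The maximum transmission. -/
noncomputable def Dmax {n : ℕ} (G : SimpleGraph (Fin n)) : ℕ :=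
  Finset.univ.sup (transmission G)

/-- The minimum transmission. -/
noncomputable def Dmin {n : ℕ} (G : SimpleGraph (Fin n)) : ℕ :=
  sInf (Set.range (transmission G))

/-- The Wiener index: half the sum of all transmissions. -/
noncomputable def wiener {n : ℕ} (G : SimpleGraph (Fin n)) : ℝ :=
  (∑ v, (transmission G v : ℝ)) / 2

/-- `G` is an `r`-DVDR graph: `G` is connected and has a (distinguished) vertex `v`
of degree `n-1` such that `G - v` is `r`-regular. -/
def IsDVDR {n : ℕ} (G : SimpleGraph (Fin n)) (r : ℕ) : Prop :=
  G.Connected ∧ ∃ v : Fin n,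
    (G.neighborSet v).ncard = n - 1 ∧
    ∀ w : ({v}ᶜ : Set (Fin n)), ((G.induce {v}ᶜ).neighborSet w).ncard = r

/-! ### Auxiliary spectral lemmas -/

section Spectral

variable {m : ℕ}

lemma rayleigh_le [Nonempty (Fin m)] {A : Matrix (Fin m) (Fin m) ℝ} (hA : A.IsHermitian)
    (x : Fin m → ℝ) : x ⬝ᵥ (A *ᵥ x) ≤ (⨆ i, hA.eigenvalues i) * (x ⬝ᵥ x) := by
  classical
  set U : Matrix (Fin m) (Fin m) ℝ := (hA.eigenvectorUnitary : Matrix (Fin m) (Fin m) ℝ) with hU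
  set c : Fin m → ℝ := (star U) *ᵥ x with hc
  have hUs : U * star U = 1 := (Matrix.mem_unitaryGroup_iff).mp hA.eigenvectorUnitary.2
  have hstar : star U = Uᵀ := by
    ext i j; simp [Matrix.star_apply]
  have key : x ⬝ᵥ (A *ᵥ x) = ∑ i, hA.eigenvalues i * (c i)^2 := by
    conv_lhs => rw [hA.spectral_theorem, Unitary.conjStarAlgAut_apply]
    rw [← Matrix.mulVec_mulVec, ← Matrix.mulVec_mulVec]
    rw [Matrix.dotProduct_mulVec x U, ← Matrix.mulVec_transpose, ← hstar, ← hc]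
    rw [Matrix.dotProduct_mulVec c, ← Matrix.mulVec_transpose]
    rw [Matrix.diagonal_transpose]
    simp only [dotProduct, Matrix.mulVec_diagonal, Function.comp,
      RCLike.ofReal_real_eq_id, id_eq, pow_two]
    exact Finset.sum_congr rfl fun i _ => by ring
  have hnorm : c ⬝ᵥ c = x ⬝ᵥ x := by
    rw [hc, Matrix.dotProduct_mulVec, ← Matrix.mulVec_transpose, hstar,
      Matrix.transpose_transpose, Matrix.mulVec_mulVec, ← hstar, hUs, Matrix.one_mulVec]
  rw [key, ← hnorm]
  have hb : BddAbove (Set.range hA.eigenvalues) := Set.Finite.bddAbove (Set.finite_range _)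
  have hterm : ∀ i, hA.eigenvalues i * (c i)^2 ≤ (⨆ j, hA.eigenvalues j) * (c i)^2 := by
    intro i
    exact mul_le_mul_of_nonneg_right (le_ciSup hb i) (sq_nonneg _)
  calc ∑ i, hA.eigenvalues i * (c i)^2 ≤ ∑ i, (⨆ j, hA.eigenvalues j) * (c i)^2 :=
        Finset.sum_le_sum fun i _ => hterm i
    _ = (⨆ j, hA.eigenvalues j) * (c ⬝ᵥ c) := by
        rw [← Finset.mul_sum]; simp [dotProduct, pow_two]

lemma exists_nonneg_eigenvector [Nonempty (Fin m)] {A : Matrix (Fin m) (Fin m) ℝ}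
    (hA : A.IsHermitian) (hnn : ∀ i j, 0 ≤ A i j) :
    ∃ x : Fin m → ℝ, x ≠ 0 ∧ (∀ i, 0 ≤ x i) ∧ A *ᵥ x = (⨆ i, hA.eigenvalues i) • x := by
  classical
  set lam := ⨆ i, hA.eigenvalues i with hlam
  obtain ⟨i0, hi0⟩ := Finite.exists_max hA.eigenvalues
  have hlam0 : lam = hA.eigenvalues i0 :=
    le_antisymm (ciSup_le hi0) (le_ciSup (Set.Finite.bddAbove (Set.finite_range _)) i0)
  set u : Fin m → ℝ := ⇑(hA.eigenvectorBasis i0) with hu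
  have hue : A *ᵥ u = lam • u := by rw [hlam0]; exact hA.mulVec_eigenvectorBasis i0
  have hune : u ≠ 0 := by
    have := hA.eigenvectorBasis.orthonormal.ne_zero i0
    intro h
    apply this
    ext j
    exact congrFun h j
  set z : Fin m → ℝ := fun i => |u i| with hz
  have hzz : z ⬝ᵥ z = u ⬝ᵥ u := by
    simp [dotProduct, hz, abs_mul_abs_self]
  have huu : u ⬝ᵥ (A *ᵥ u) ≤ z ⬝ᵥ (A *ᵥ z) := by
    simp only [dotProduct, Matrix.mulVec]
    apply Finset.sum_le_sum
    intro i _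
    rw [Finset.mul_sum, Finset.mul_sum]
    apply Finset.sum_le_sum
    intro j _
    calc u i * (A i j * u j) = A i j * (u i * u j) := by ring
      _ ≤ A i j * (z i * z j) := by
          apply mul_le_mul_of_nonneg_left _ (hnn i j)
          rw [hz]
          calc u i * u j ≤ |u i * u j| := le_abs_self _
            _ = |u i| * |u j| := abs_mul _ _
      _ = z i * (A i j * z j) := by ring
  have hzA : z ⬝ᵥ (A *ᵥ z) = lam * (z ⬝ᵥ z) := by
    have h1 : z ⬝ᵥ (A *ᵥ z) ≤ lam * (z ⬝ᵥ z) := rayleigh_le hA z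
    have h2 : lam * (z ⬝ᵥ z) ≤ z ⬝ᵥ (A *ᵥ z) := by
      rw [hzz]
      calc lam * (u ⬝ᵥ u) = u ⬝ᵥ (lam • u) := by
            simp [dotProduct, Finset.mul_sum]; exact Finset.sum_congr rfl fun i _ => by ring
        _ = u ⬝ᵥ (A *ᵥ u) := by rw [hue]
        _ ≤ z ⬝ᵥ (A *ᵥ z) := huu
    linarith
  set M : Matrix (Fin m) (Fin m) ℝ := lam • (1 : Matrix (Fin m) (Fin m) ℝ) - A with hM
  have hMq : ∀ y : Fin m → ℝ, 0 ≤ y ⬝ᵥ (M *ᵥ y) := by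
    intro y
    have := rayleigh_le hA y
    have hexp : y ⬝ᵥ (M *ᵥ y) = lam * (y ⬝ᵥ y) - y ⬝ᵥ (A *ᵥ y) := by
      rw [hM, Matrix.sub_mulVec, dotProduct_sub, Matrix.smul_mulVec,
        Matrix.one_mulVec, dotProduct_smul]
      simp [smul_eq_mul]
    rw [hexp]; linarith
  have hMz : z ⬝ᵥ (M *ᵥ z) = 0 := by
    have hthis : z ⬝ᵥ (M *ᵥ z) = lam * (z ⬝ᵥ z) - z ⬝ᵥ (A *ᵥ z) := by
      rw [hM, Matrix.sub_mulVec, dotProduct_sub, Matrix.smul_mulVec,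
        Matrix.one_mulVec, dotProduct_smul]
      simp [smul_eq_mul]
    rw [hthis, hzA]; ring
  have hMT : Mᵀ = M := by
    have hAT : Aᵀ = A := by
      ext a b
      have := congrFun (congrFun hA a) b
      simpa [Matrix.conjTranspose_apply] using this
    rw [hM]
    rw [Matrix.transpose_sub, Matrix.transpose_smul, Matrix.transpose_one, hAT]
  have symdot : ∀ y₁ y₂ : Fin m → ℝ, y₁ ⬝ᵥ (M *ᵥ y₂) = y₂ ⬝ᵥ (M *ᵥ y₁) := by
    intro y₁ y₂
    rw [Matrix.dotProduct_mulVec, ← Matrix.mulVec_transpose, hMT, dotProduct_comm]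
  have hMz0 : M *ᵥ z = 0 := by
    set w : Fin m → ℝ := M *ᵥ z with hw
    have hall : ∀ y : Fin m → ℝ, y ⬝ᵥ w = 0 := by
      intro y
      set c := y ⬝ᵥ w with hcdef
      set q := y ⬝ᵥ (M *ᵥ y) with hqdef
      have hq : 0 ≤ q := hMq y
      have hexp : ∀ t : ℝ, 0 ≤ 2 * t * c + t ^ 2 * q := by
        intro t
        have h0 := hMq (z + t • y)
        have hthis : (z + t • y) ⬝ᵥ (M *ᵥ (z + t • y))
            = z ⬝ᵥ (M *ᵥ z) + t * (y ⬝ᵥ (M *ᵥ z)) + t * (z ⬝ᵥ (M *ᵥ y)) + t ^ 2 * q := by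
          simp only [Matrix.mulVec_add, Matrix.mulVec_smul, dotProduct_add,
            add_dotProduct, dotProduct_smul, smul_dotProduct,
            smul_eq_mul]
          ring
        rw [hthis, hMz, symdot z y, ← hw, ← hcdef] at h0
        convert h0 using 1
        ring
      have ht := hexp (-(c / (q + 1)))
      have hd : (0:ℝ) < q + 1 := by linarith
      have ht' : 0 ≤ (q+1)^2 * (2 * (-(c / (q + 1))) * c + (-(c / (q + 1)))^2 * q) :=
        mul_nonneg (sq_nonneg _) ht
      have hexp2 : (q+1)^2 * (2 * (-(c / (q + 1))) * c + (-(c / (q + 1)))^2 * q)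
          = -(c^2) * (q + 2) := by
        field_simp
        ring
      rw [hexp2] at ht'
      nlinarith [sq_nonneg c, hq]
    have := hall w
    exact dotProduct_self_eq_zero.mp this
  refine ⟨z, ?_, fun i => abs_nonneg _, ?_⟩
  · intro h
    apply hune
    funext j
    have : z j = 0 := congrFun h j
    rw [hz] at this
    simpa [abs_eq_zero] using this
  · have hzd : lam • z - A *ᵥ z = 0 := by
      have : M *ᵥ z = lam • z - A *ᵥ z := by
        rw [hM, Matrix.sub_mulVec, Matrix.smul_mulVec, Matrix.one_mulVec]
      rw [← this, hMz0]
    funext j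
    have := congrFun hzd j
    simp only [Pi.sub_apply, Pi.zero_apply, sub_eq_zero] at this
    exact this.symm

end Spectral

/-! ### Auxiliary graph lemmas -/

lemma even_transmission_sum {n : ℕ} (G : SimpleGraph (Fin n)) :
    Even (∑ v, transmission G v) := by
  classical
  have h1 : ∑ v, transmission G v = ∑ p ∈ (Finset.univ ×ˢ Finset.univ : Finset (Fin n × Fin n)),
      G.dist p.1 p.2 := by
    rw [Finset.sum_product]
    rfl
  set s := (Finset.univ ×ˢ Finset.univ : Finset (Fin n × Fin n))
  have h2 : ∑ p ∈ s, G.dist p.1 p.2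
      = ∑ p ∈ s.filter (fun p => p.1 < p.2), G.dist p.1 p.2
      + ∑ p ∈ s.filter (fun p => ¬ p.1 < p.2), G.dist p.1 p.2 :=
    (Finset.sum_filter_add_sum_filter_not s _ _).symm
  have h3 : ∑ p ∈ s.filter (fun p => ¬ p.1 < p.2), G.dist p.1 p.2
      = ∑ p ∈ s.filter (fun p => p.2 < p.1), G.dist p.1 p.2 := by
    apply (Finset.sum_subset ?_ ?_).symm
    · intro p hp
      simp only [Finset.mem_filter] at hp ⊢
      exact ⟨hp.1, not_lt_of_gt hp.2⟩
    · intro p hp hnp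
      simp only [Finset.mem_filter] at hp hnp
      have : p.1 = p.2 := le_antisymm (le_of_not_gt (fun h => hnp ⟨hp.1, h⟩)) (le_of_not_gt hp.2)
      rw [this, SimpleGraph.dist_self]
  have h4 : ∑ p ∈ s.filter (fun p => p.2 < p.1), G.dist p.1 p.2
      = ∑ p ∈ s.filter (fun p => p.1 < p.2), G.dist p.1 p.2 := by
    refine Finset.sum_nbij' (fun p => (p.2, p.1)) (fun p => (p.2, p.1)) ?_ ?_ ?_ ?_ ?_ <;>
      simp [SimpleGraph.dist_comm, s]
  rw [h1, h2, h3, h4]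
  exact ⟨_, rfl⟩

lemma neighborSet_eq_compl {n : ℕ} {G : SimpleGraph (Fin n)} {t : Fin n}
    (h : ∀ u, u ≠ t → G.Adj t u) : G.neighborSet t = {t}ᶜ := by
  ext u
  simp only [SimpleGraph.mem_neighborSet, Set.mem_compl_iff, Set.mem_singleton_iff]
  constructor
  · intro ha he; exact G.irrefl (he ▸ ha)
  · intro hne; exact h u hne

lemma ncard_compl_singleton {n : ℕ} (t : Fin n) : ({t}ᶜ : Set (Fin n)).ncard = n - 1 := by
  classical
  rw [Set.ncard_eq_toFinset_card', Set.toFinset_compl, Set.toFinset_singleton,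
    Finset.card_compl, Finset.card_singleton, Fintype.card_fin]

lemma dominating_dist_two {n : ℕ} {G : SimpleGraph (Fin n)} (hG : G.Connected) {t : Fin n}
    (h : ∀ u, u ≠ t → G.Adj t u) {w u : Fin n} (hne : u ≠ w) (hna : ¬ G.Adj w u) :
    G.dist w u = 2 := by
  have hwt : w ≠ t := by
    rintro rfl
    exact hna (h u hne)
  have hut : u ≠ t := by
    rintro rfl
    exact hna (h w (fun he => hne he.symm)).symm
  have hle : G.dist w u ≤ 2 := by
    have hp : G.dist w u ≤ (SimpleGraph.Walk.cons (h w hwt).symm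
        (SimpleGraph.Walk.cons (h u hut) SimpleGraph.Walk.nil)).length :=
      SimpleGraph.dist_le _
    simpa using hp
  have hpos : 0 < G.dist w u := hG.pos_dist_of_ne (fun e => hne e.symm)
  have hne1 : G.dist w u ≠ 1 := fun e => hna ((SimpleGraph.dist_eq_one_iff_adj).mp e)
  omega

lemma dominating_transmission {n : ℕ} {G : SimpleGraph (Fin n)} (hG : G.Connected) {t : Fin n}
    (h : ∀ u, u ≠ t → G.Adj t u) (w : Fin n) :
    transmission G w + (G.neighborSet w).ncard = 2 * (n - 1) := by
  classical
  have hcard : (G.neighborSet w).ncard = (Finset.univ.filter (fun u => G.Adj w u)).card := by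
    rw [Set.ncard_eq_toFinset_card']
    congr 1
    ext u
    simp
  rw [hcard, Finset.card_filter, transmission, ← Finset.sum_add_distrib]
  have key : ∀ u : Fin n, G.dist w u + (if G.Adj w u then 1 else 0)
      = if u = w then 0 else 2 := by
    intro u
    by_cases he : u = w
    · subst he; simp [SimpleGraph.dist_self, G.irrefl]
    · by_cases ha : G.Adj w u
      · rw [if_neg he, if_pos ha, (SimpleGraph.dist_eq_one_iff_adj).mpr ha]
      · rw [if_neg he, if_neg ha, dominating_dist_two hG h he ha]
  rw [Finset.sum_congr rfl (fun u _ => key u)]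
  rw [← Finset.sum_erase (f := fun u : Fin n => if u = w then (0:ℕ) else 2) (a := w)
    Finset.univ (by simp)]
  rw [Finset.sum_congr rfl (fun u hu => if_neg (Finset.ne_of_mem_erase hu))]
  rw [Finset.sum_const, Finset.card_erase_of_mem (Finset.mem_univ w), Finset.card_univ,
    Fintype.card_fin, smul_eq_mul, mul_comm]

lemma induce_neighbor_ncard {n : ℕ} (G : SimpleGraph (Fin n)) (t : Fin n)
    (w : ({t}ᶜ : Set (Fin n))) :
    ((G.induce {t}ᶜ).neighborSet w).ncard = (G.neighborSet (↑w) \ {t}).ncard := by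
  rw [← Set.ncard_image_of_injective _ (Subtype.coe_injective
    : Function.Injective (Subtype.val : ({t}ᶜ : Set (Fin n)) → Fin n))]
  congr 1
  ext x
  simp only [Set.mem_image, SimpleGraph.mem_neighborSet, Set.mem_diff,
    Set.mem_singleton_iff, SimpleGraph.comap_adj, Function.Embedding.coe_subtype]
  constructor
  · rintro ⟨u, hadj, rfl⟩
    exact ⟨hadj, u.2⟩
  · rintro ⟨hadj, hxt⟩
    exact ⟨⟨x, hxt⟩, hadj, rfl⟩

lemma neighbor_ncard_sub_one {n : ℕ} {G : SimpleGraph (Fin n)} {t w : Fin n}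
    (h : G.Adj w t) : (G.neighborSet w \ {t}).ncard = (G.neighborSet w).ncard - 1 := by
  exact Set.ncard_diff_singleton_of_mem h

lemma transmission_lb {n : ℕ} {G : SimpleGraph (Fin n)} (hG : G.Connected) (v : Fin n) :
    n - 1 ≤ transmission G v := by
  classical
  calc n - 1 = (Finset.univ.erase v).card := by
        rw [Finset.card_erase_of_mem (Finset.mem_univ v), Finset.card_univ, Fintype.card_fin]
    _ = ∑ u ∈ Finset.univ.erase v, 1 := by rw [Finset.sum_const, smul_eq_mul, mul_one]
    _ ≤ ∑ u ∈ Finset.univ.erase v, G.dist v u := by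
        apply Finset.sum_le_sum
        intro u hu
        exact hG.pos_dist_of_ne (fun e => (Finset.ne_of_mem_erase hu) e.symm)
    _ ≤ ∑ u, G.dist v u := Finset.sum_le_sum_of_subset (Finset.subset_univ _)


lemma dvdr_eq {n : ℕ} (G : SimpleGraph (Fin n)) (hG : G.Connected) (hn4 : 4 ≤ n)
    (hD : IsDVDR G (n - 4)) :
    (Dmax G : ℝ) - lambda1 G
      = ((n : ℝ) + 2 - Real.sqrt ((n : ℝ) ^ 2 + 4 * n - 4)) / 2 := by
  classical
  haveI : Nonempty (Fin n) := ⟨⟨0, by omega⟩⟩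
  obtain ⟨-, v, hv1, hv2⟩ := hD
  set N : ℝ := (n : ℝ) with hNdef
  have hN4 : (4:ℝ) ≤ N := by rw [hNdef]; exact_mod_cast hn4
  set sq : ℝ := Real.sqrt (N ^ 2 + 4 * N - 4) with hsqdef
  have hsq2 : sq ^ 2 = N ^ 2 + 4 * N - 4 := by
    rw [hsqdef]; exact Real.sq_sqrt (by nlinarith)
  have hsq0 : 0 ≤ sq := by rw [hsqdef]; exact Real.sqrt_nonneg _
  set lamstar : ℝ := (N + sq) / 2 with hlsdef
  have hroot : lamstar ^ 2 = N * lamstar + (N - 1) := by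
    rw [hlsdef]; linear_combination ((1:ℝ)/4) * hsq2
  have hlspos : 0 < lamstar := by rw [hlsdef]; linarith only [hsq0, hN4]
  -- structure of the graph
  have hsub : G.neighborSet v ⊆ {v}ᶜ := by
    intro u hu
    simp only [Set.mem_compl_iff, Set.mem_singleton_iff]
    intro he
    exact G.irrefl (he ▸ hu)
  have hset : G.neighborSet v = {v}ᶜ :=
    Set.eq_of_subset_of_ncard_le hsub
      (by rw [hv1, ncard_compl_singleton]) (Set.toFinite _)
  have hdom : ∀ u, u ≠ v → G.Adj v u := by
    intro u hu
    have : u ∈ G.neighborSet v := by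
      rw [hset]
      simpa using hu
    exact this
  have hTv : transmission G v = n - 1 := by
    have hd := dominating_transmission hG hdom v
    rw [hset, ncard_compl_singleton] at hd
    omega
  have hdegw : ∀ w, w ≠ v → (G.neighborSet w).ncard = n - 3 := by
    intro w hw
    have hw2 : w ∈ ({v}ᶜ : Set (Fin n)) := by simpa using hw
    have h1 := hv2 ⟨w, hw2⟩
    rw [induce_neighbor_ncard, neighbor_ncard_sub_one ((hdom w hw).symm)] at h1
    have h2 : 0 < (G.neighborSet w).ncard := by
      rw [Set.ncard_pos (Set.toFinite _)]
      exact ⟨v, (hdom w hw).symm⟩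
    omega
  have hTw : ∀ w, w ≠ v → transmission G w = n + 1 := by
    intro w hw
    have hd := dominating_transmission hG hdom w
    rw [hdegw w hw] at hd
    omega
  have hwit : ∃ w : Fin n, w ≠ v := by
    haveI : Nontrivial (Fin n) := by
      apply Fintype.one_lt_card_iff_nontrivial.mp
      simpa using (by omega : 1 < n)
    exact exists_ne v
  have hDmax : Dmax G = n + 1 := by
    apply le_antisymm
    · apply Finset.sup_le
      intro w _
      by_cases hw : w = v
      · rw [hw, hTv]; omega
      · rw [hTw w hw]
    · obtain ⟨w, hw⟩ := hwit
      have := Finset.le_sup (f := transmission G) (Finset.mem_univ w)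
      rw [hTw w hw] at this
      exact this
  -- the eigenvector
  set y : Fin n → ℝ := fun u => if u = v then N - 1 else lamstar with hydef
  have hyval : ∀ u, y u = if u = v then N - 1 else lamstar := fun u => rfl
  have hypos : ∀ u, 0 < y u := by
    intro u
    rw [hyval u]
    by_cases hu : u = v
    · rw [if_pos hu]; linarith
    · rw [if_neg hu]; exact hlspos
  have hdist1 : ∀ w, w ≠ v → (G.dist w v : ℝ) = 1 := by
    intro w hw
    have : G.dist w v = 1 := (SimpleGraph.dist_eq_one_iff_adj).mpr (hdom w hw).symm
    exact_mod_cast this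
  have heig : distMatrix G *ᵥ y = lamstar • y := by
    funext u
    have happ : (distMatrix G *ᵥ y) u = ∑ w, (G.dist u w : ℝ) * y w := by
      simp [Matrix.mulVec, dotProduct, distMatrix]
    rw [happ]
    by_cases hu : u = v
    · subst hu
      have h1 : ∀ w ∈ Finset.univ.erase u, (G.dist u w : ℝ) * y w = lamstar := by
        intro w hw
        have hwne : w ≠ u := Finset.ne_of_mem_erase hw
        have hd : (G.dist u w : ℝ) = 1 := by
          rw [SimpleGraph.dist_comm]; exact hdist1 w hwne
        rw [hd, hyval w, if_neg hwne, one_mul]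
      have h0 : ∑ w, (G.dist u w : ℝ) * y w = ∑ w ∈ Finset.univ.erase u, (G.dist u w : ℝ) * y w :=
        (Finset.sum_erase _ (by simp [SimpleGraph.dist_self])).symm
      rw [h0, Finset.sum_congr rfl h1, Finset.sum_const,
        Finset.card_erase_of_mem (Finset.mem_univ u), Finset.card_univ, Fintype.card_fin,
        nsmul_eq_mul, Nat.cast_sub (by omega)]
      have hyu : y u = N - 1 := by rw [hyval u, if_pos rfl]
      rw [Pi.smul_apply, hyu, smul_eq_mul, hNdef]
      norm_num
      ring
    · have hsplit : ∑ w, (G.dist u w : ℝ) * y w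
          = (G.dist u v : ℝ) * y v + ∑ w ∈ Finset.univ.erase v, (G.dist u w : ℝ) * y w :=
        (Finset.add_sum_erase _ _ (Finset.mem_univ v)).symm
      have hyv : y v = N - 1 := by rw [hyval v, if_pos rfl]
      have h1 : ∀ w ∈ Finset.univ.erase v, (G.dist u w : ℝ) * y w
          = (G.dist u w : ℝ) * lamstar := by
        intro w hw
        rw [hyval w, if_neg (Finset.ne_of_mem_erase hw)]
      have h2 : ∑ w ∈ Finset.univ.erase v, (G.dist u w : ℝ) = N := by
        have he : ∑ w ∈ Finset.univ.erase v, (G.dist u w : ℝ)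
            = (∑ w, (G.dist u w : ℝ)) - (G.dist u v : ℝ) :=
          Finset.sum_erase_eq_sub (Finset.mem_univ v)
        have htr : ∑ w, (G.dist u w : ℝ) = ((transmission G u : ℕ) : ℝ) := by
          rw [transmission, Nat.cast_sum]
        rw [he, htr, hTw u hu, hdist1 u hu]
        rw [hNdef]
        push_cast
        ring
      have h3 : ∑ w ∈ Finset.univ.erase v, (G.dist u w : ℝ) * lamstar
          = N * lamstar := by
        rw [← Finset.sum_mul, h2]
      rw [hsplit, Finset.sum_congr rfl h1, h3, hyv, hdist1 u hu]
      have hyu : y u = lamstar := by rw [hyval u, if_neg hu]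
      rw [Pi.smul_apply, hyu, smul_eq_mul]
      nlinarith only [hroot]
  -- identification of lambda1
  have hnnD : ∀ i j, 0 ≤ distMatrix G i j := fun i j => Nat.cast_nonneg _
  obtain ⟨x, hx0, hxnn, hxeig⟩ := exists_nonneg_eigenvector (distMatrix_isHermitian G) hnnD
  have hlam_eq : lambda1 G = ⨆ i, (distMatrix_isHermitian G).eigenvalues i := rfl
  have hxeig' : distMatrix G *ᵥ x = lambda1 G • x := by rw [hlam_eq]; exact hxeig
  have hDT : (distMatrix G)ᵀ = distMatrix G := by
    ext i j
    simp [distMatrix, Matrix.transpose_apply, SimpleGraph.dist_comm]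
  have hxy : 0 < x ⬝ᵥ y := by
    apply Finset.sum_pos' (fun i _ => mul_nonneg (hxnn i) (hypos i).le)
    obtain ⟨i, hi⟩ := Function.ne_iff.mp hx0
    exact ⟨i, Finset.mem_univ i,
      mul_pos (lt_of_le_of_ne (hxnn i) (Ne.symm hi)) (hypos i)⟩
  have hpair : lambda1 G * (x ⬝ᵥ y) = lamstar * (x ⬝ᵥ y) := by
    have h1 : (distMatrix G *ᵥ x) ⬝ᵥ y = lambda1 G * (x ⬝ᵥ y) := by
      rw [hxeig']
      simp [smul_dotProduct, smul_eq_mul]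
    have h2 : (distMatrix G *ᵥ x) ⬝ᵥ y = x ⬝ᵥ (distMatrix G *ᵥ y) := by
      rw [dotProduct_comm, Matrix.dotProduct_mulVec, ← Matrix.mulVec_transpose, hDT]
      rw [dotProduct_comm]
    have h3 : x ⬝ᵥ (distMatrix G *ᵥ y) = lamstar * (x ⬝ᵥ y) := by
      rw [heig]
      rw [dotProduct_smul, smul_eq_mul]
    rw [← h1, h2, h3]
  have hlam : lambda1 G = lamstar := mul_right_cancel₀ hxy.ne' hpair
  rw [hlam, hDmax, hlsdef, hNdef]
  push_cast
  ring


set_option maxHeartbeats 8000000 in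
theorem stmt16 (n : ℕ) (heven : Even n) (G : SimpleGraph (Fin n)) (hG : G.Connected)
    (hntr : ¬ ∀ u v : Fin n, transmission G u = transmission G v) :
    ((n : ℝ) + 2 - Real.sqrt ((n : ℝ) ^ 2 + 4 * n - 4)) / 2
        ≤ (Dmax G : ℝ) - lambda1 G ∧
    ((Dmax G : ℝ) - lambda1 G
        = ((n : ℝ) + 2 - Real.sqrt ((n : ℝ) ^ 2 + 4 * n - 4)) / 2
      ↔ IsDVDR G (n - 4)) := by
  classical
  -- basic size facts
  push_neg at hntr
  obtain ⟨a, b, hab⟩ := hntr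
  have hab' : a ≠ b := fun h => hab (h ▸ rfl)
  have hn2 : 2 ≤ n := by
    have h1 : 1 < Fintype.card (Fin n) := Fintype.one_lt_card_iff.mpr ⟨a, b, hab'⟩
    simp at h1; omega
  have hn4 : 4 ≤ n := by
    by_contra hlt
    have hn2' : n = 2 := by
      obtain ⟨k, hk⟩ := heven
      omega
    have huniv : (Finset.univ : Finset (Fin n)) = {a, b} := by
      apply (Finset.eq_of_subset_of_card_le (Finset.subset_univ _) ?_).symm
      rw [Finset.card_univ, Fintype.card_fin, Finset.card_insert_of_notMem (by simp [hab']),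
        Finset.card_singleton, hn2']
    apply hab
    have hta : transmission G a = G.dist a b := by
      rw [transmission, huniv, Finset.sum_pair hab', SimpleGraph.dist_self, zero_add]
    have htb : transmission G b = G.dist a b := by
      rw [transmission, huniv, Finset.sum_pair hab', SimpleGraph.dist_self, add_zero,
        SimpleGraph.dist_comm]
    rw [hta, htb]
  haveI : Nonempty (Fin n) := ⟨⟨0, by omega⟩⟩
  -- natural-number facts about transmissions
  have hTle : ∀ v, transmission G v ≤ Dmax G := fun v => Finset.le_sup (Finset.mem_univ v)
  have hDmn_le : ∀ v, Dmin G ≤ transmission G v := fun v => Nat.sInf_le ⟨v, rfl⟩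
  obtain ⟨t0, ht0⟩ : ∃ t0, transmission G t0 = Dmin G := by
    have h := Nat.sInf_mem (Set.range_nonempty (transmission G))
    obtain ⟨t0, h⟩ := h
    exact ⟨t0, h⟩
  have hminmax : Dmin G < Dmax G := by
    rcases eq_or_lt_of_le (ht0 ▸ hTle t0 : Dmin G ≤ Dmax G) with he | h
    · exfalso
      apply hab
      have h1 := hTle a; have h2 := hDmn_le a; have h3 := hTle b; have h4 := hDmn_le b
      omega
    · exact h
  have hsum_le : ∑ v, transmission G v ≤ n * Dmax G := by
    calc ∑ v, transmission G v ≤ ∑ _v : Fin n, Dmax G :=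
          Finset.sum_le_sum (fun v _ => hTle v)
      _ = n * Dmax G := by
          rw [Finset.sum_const, Finset.card_univ, Fintype.card_fin, smul_eq_mul]
  have hΔ2 : 2 ≤ n * Dmax G - ∑ v, transmission G v := by
    have hsum_lt : ∑ v, transmission G v < n * Dmax G := by
      have h1 : ∑ v, transmission G v < ∑ _v : Fin n, Dmax G :=
        Finset.sum_lt_sum (fun v _ => hTle v) ⟨t0, Finset.mem_univ _, by rw [ht0]; exact hminmax⟩
      calc ∑ v, transmission G v < ∑ _v : Fin n, Dmax G := h1
        _ = n * Dmax G := by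
            rw [Finset.sum_const, Finset.card_univ, Fintype.card_fin, smul_eq_mul]
    obtain ⟨a1, ha1⟩ := even_transmission_sum G
    obtain ⟨k, hk⟩ := heven
    have hnd : n * Dmax G = 2 * (k * Dmax G) := by rw [two_mul, ← add_mul, ← hk]
    omega
  -- real quantities
  set N : ℝ := (n : ℝ) with hNdef
  set Dmx : ℝ := (Dmax G : ℝ) with hDmxdef
  set Dmn : ℝ := (Dmin G : ℝ) with hDmndef
  set lam : ℝ := lambda1 G with hlamdef
  set sq : ℝ := Real.sqrt (N ^ 2 + 4 * N - 4) with hsqdef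
  set ε : ℝ := (N + 2 - sq) / 2 with hεdef
  have hN4 : (4:ℝ) ≤ N := by rw [hNdef]; exact_mod_cast hn4
  have hsq2 : sq ^ 2 = N ^ 2 + 4 * N - 4 := by
    rw [hsqdef]; exact Real.sq_sqrt (by nlinarith)
  have hsq0 : 0 ≤ sq := by rw [hsqdef]; exact Real.sqrt_nonneg _
  have hε2 : ε * (N + 2 - ε) = 2 := by
    rw [hεdef]; linear_combination (-(1:ℝ)/4) * hsq2
  have hεpos : 0 < ε := by
    have hlt : sq < N + 2 := by nlinarith only [hsq2, hsq0, hN4]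
    rw [hεdef]; linarith
  have hεlt1 : ε < 1 := by
    have hlt : N < sq := by nlinarith only [hsq2, hsq0, hN4]
    rw [hεdef]; linarith
  have hTrle : ∀ v, (transmission G v : ℝ) ≤ Dmx := by
    intro v; rw [hDmxdef]; exact_mod_cast hTle v
  have hTrge : ∀ v, Dmn ≤ (transmission G v : ℝ) := by
    intro v; rw [hDmndef]; exact_mod_cast hDmn_le v
  have hTrlb : ∀ v, N - 1 ≤ (transmission G v : ℝ) := by
    intro v
    have h := transmission_lb hG v
    have h2 : ((n - 1 : ℕ) : ℝ) = N - 1 := by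
      rw [Nat.cast_sub (by omega), hNdef]; norm_num
    rw [← h2]; exact_mod_cast h
  have hTrt0 : (transmission G t0 : ℝ) = Dmn := by rw [hDmndef]; exact_mod_cast ht0
  -- spectral setup
  have hnnD : ∀ i j, 0 ≤ distMatrix G i j := fun i j => Nat.cast_nonneg _
  have hlam_eq : lam = ⨆ i, (distMatrix_isHermitian G).eigenvalues i := by
    rw [hlamdef]; rfl
  obtain ⟨x, hx0, hxnn, hxeig⟩ := exists_nonneg_eigenvector (distMatrix_isHermitian G) hnnD
  have hxeig' : distMatrix G *ᵥ x = lam • x := by rw [hlam_eq]; exact hxeig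
  have hray : ∀ y : Fin n → ℝ, y ⬝ᵥ (distMatrix G *ᵥ y) ≤ lam * (y ⬝ᵥ y) := by
    intro y; rw [hlam_eq]; exact rayleigh_le (distMatrix_isHermitian G) y
  set S : ℝ := ∑ v, x v with hSdef
  have hS : 0 < S := by
    rw [hSdef]
    apply Finset.sum_pos' (fun i _ => hxnn i)
    obtain ⟨i, hi⟩ := Function.ne_iff.mp hx0
    exact ⟨i, Finset.mem_univ i, lt_of_le_of_ne (hxnn i) (Ne.symm hi)⟩
  obtain ⟨t, -, htmin⟩ := Finset.exists_min_image Finset.univ x ⟨a, Finset.mem_univ a⟩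
  have hxt : ∀ u, x t ≤ x u := fun u => htmin u (Finset.mem_univ u)
  have hlamx : ∀ v, lam * x v = ∑ u, (G.dist v u : ℝ) * x u := by
    intro v
    have happ : (distMatrix G *ᵥ x) v = ∑ u, (G.dist v u : ℝ) * x u := by
      simp [Matrix.mulVec, dotProduct, distMatrix]
    rw [← happ, hxeig']
    simp
  have hTrv : ∀ v, (transmission G v : ℝ) = ∑ u, (G.dist v u : ℝ) := by
    intro v; rw [transmission, Nat.cast_sum]
  have hcard_erase : ∀ v : Fin n, (((Finset.univ : Finset (Fin n)).erase v).card : ℝ) = N - 1 := by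
    intro v
    rw [Finset.card_erase_of_mem (Finset.mem_univ v), Finset.card_univ, Fintype.card_fin,
      Nat.cast_sub (by omega), hNdef]
    norm_num
  -- key identity E1
  have hE1 : lam * S = ∑ v, (transmission G v : ℝ) * x v := by
    rw [hSdef, Finset.mul_sum]
    calc ∑ v, lam * x v = ∑ v, ∑ u, (G.dist v u : ℝ) * x u :=
          Finset.sum_congr rfl fun v _ => hlamx v
      _ = ∑ u, (∑ v, (G.dist v u : ℝ)) * x u := by
          rw [Finset.sum_comm]
          exact Finset.sum_congr rfl fun u _ => by rw [Finset.sum_mul]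
      _ = ∑ u, (transmission G u : ℝ) * x u := by
          apply Finset.sum_congr rfl
          intro u _
          congr 1
          rw [hTrv]
          exact Finset.sum_congr rfl fun v _ => by rw [SimpleGraph.dist_comm]
  -- key identity E2
  have hE2a : ∀ v, ∑ u ∈ Finset.univ.erase v, ((G.dist v u : ℝ) - 1) * (x u - x t)
      = lam * x v - (S - x v) - ((transmission G v : ℝ) - (N - 1)) * x t := by
    intro v
    have h0 : ∑ u ∈ Finset.univ.erase v, (G.dist v u : ℝ) * x u = lam * x v := by
      rw [hlamx]
      exact Finset.sum_erase _ (by simp [SimpleGraph.dist_self])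
    have h2 : ∑ u ∈ Finset.univ.erase v, x u = S - x v := by
      rw [hSdef]; exact Finset.sum_erase_eq_sub (Finset.mem_univ v)
    have h3 : ∑ u ∈ Finset.univ.erase v, (G.dist v u : ℝ) = (transmission G v : ℝ) := by
      rw [hTrv]
      exact Finset.sum_erase _ (by simp [SimpleGraph.dist_self])
    have hexpand : ∑ u ∈ Finset.univ.erase v, ((G.dist v u : ℝ) - 1) * (x u - x t)
        = (∑ u ∈ Finset.univ.erase v, (G.dist v u : ℝ) * x u)
          - (∑ u ∈ Finset.univ.erase v, x u)
          - x t * (∑ u ∈ Finset.univ.erase v, (G.dist v u : ℝ))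
          + ((Finset.univ.erase v).card : ℝ) * x t := by
      rw [Finset.sum_congr rfl (fun u _ => show ((G.dist v u : ℝ) - 1) * (x u - x t)
          = ((G.dist v u : ℝ) * x u - x u) - x t * (G.dist v u : ℝ) + x t by ring)]
      rw [Finset.sum_add_distrib, Finset.sum_sub_distrib, Finset.sum_sub_distrib,
        ← Finset.mul_sum, Finset.sum_const, nsmul_eq_mul]
    rw [hexpand, h0, h2, h3, hcard_erase]
    ring
  have hE2b : ∀ v, ∀ u ∈ Finset.univ.erase v, 0 ≤ ((G.dist v u : ℝ) - 1) * (x u - x t) := by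
    intro v u hu
    apply mul_nonneg
    · have h1 : 1 ≤ G.dist v u := hG.pos_dist_of_ne (fun e => Finset.ne_of_mem_erase hu e.symm)
      have h2 : (1:ℝ) ≤ (G.dist v u : ℝ) := by exact_mod_cast h1
      linarith
    · linarith [hxt u]
  have hE2ineq : ∀ v, (S - x v) + ((transmission G v : ℝ) - (N - 1)) * x t ≤ lam * x v := by
    intro v
    have h := Finset.sum_nonneg (hE2b v)
    rw [hE2a v] at h
    linarith
  -- lambda lower bound
  have hlamDmn : Dmn ≤ lam := by
    have h1 : (fun _ : Fin n => (1:ℝ)) ⬝ᵥ (distMatrix G *ᵥ fun _ => (1:ℝ))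
        = ∑ v, ∑ u, (G.dist v u : ℝ) := by
      simp [dotProduct, Matrix.mulVec, distMatrix]
    have h1' : (fun _ : Fin n => (1:ℝ)) ⬝ᵥ (distMatrix G *ᵥ fun _ => (1:ℝ))
        = ∑ v, (transmission G v : ℝ) := by
      rw [h1]
      exact Finset.sum_congr rfl fun v _ => (hTrv v).symm
    have h2 : ((fun _ : Fin n => (1:ℝ)) ⬝ᵥ fun _ => (1:ℝ)) = N := by
      simp [dotProduct, hNdef]
    have h3 := hray (fun _ => (1:ℝ))
    rw [h1', h2] at h3
    have h4 : N * Dmn ≤ ∑ v, (transmission G v : ℝ) := by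
      calc N * Dmn = ∑ _v : Fin n, Dmn := by
            rw [Finset.sum_const, Finset.card_univ, Fintype.card_fin, nsmul_eq_mul, hNdef]
        _ ≤ ∑ v, (transmission G v : ℝ) := Finset.sum_le_sum fun v _ => hTrge v
    have hN0 : (0:ℝ) < N := by linarith
    have h5 : Dmn * N ≤ lam * N := by linarith only [h3, h4]
    exact le_of_mul_le_mul_right h5 hN0
  have hDmnlb : N - 1 ≤ Dmn := by rw [← hTrt0]; exact hTrlb t0
  have hlampos : 0 < lam := by linarith
  have hxtpos : 0 < x t := by
    have h := hE2ineq t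
    rcases eq_or_lt_of_le (hxnn t) with he | h3
    · exfalso
      rw [← he] at h
      nlinarith only [hS, h]
    · exact h3
  -- key identity E5
  set Δ : ℝ := N * Dmx - ∑ v, (transmission G v : ℝ) with hΔdef
  have hΔ2r : 2 ≤ Δ := by
    have hcast : Δ = ((n * Dmax G - ∑ v, transmission G v : ℕ) : ℝ) := by
      rw [Nat.cast_sub hsum_le, Nat.cast_mul, Nat.cast_sum, hΔdef, hNdef, hDmxdef]
    rw [hcast]; exact_mod_cast hΔ2
  have hΔsum : Δ = ∑ v, (Dmx - (transmission G v : ℝ)) := by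
    rw [hΔdef, Finset.sum_sub_distrib, Finset.sum_const, Finset.card_univ, Fintype.card_fin,
      nsmul_eq_mul, hNdef]
  have hE5 : ∑ v, (Dmx - (transmission G v : ℝ)) * (x v - x t) = (Dmx - lam) * S - Δ * x t := by
    have hexpand : ∑ v, (Dmx - (transmission G v : ℝ)) * (x v - x t)
        = Dmx * S - (∑ v, (transmission G v : ℝ) * x v)
          - x t * (∑ v, (Dmx - (transmission G v : ℝ))) := by
      rw [Finset.sum_congr rfl (fun v _ => show (Dmx - (transmission G v : ℝ)) * (x v - x t)
          = (Dmx * x v - (transmission G v : ℝ) * x v) - x t * (Dmx - (transmission G v : ℝ))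
          by ring)]
      rw [Finset.sum_sub_distrib, Finset.sum_sub_distrib, ← Finset.mul_sum, ← Finset.mul_sum,
        ← hSdef]
    rw [hexpand, ← hE1, ← hΔsum]
    ring
  have hE5b : ∀ v ∈ Finset.univ, 0 ≤ (Dmx - (transmission G v : ℝ)) * (x v - x t) :=
    fun v _ => mul_nonneg (by linarith [hTrle v]) (by linarith [hxt v])
  set g : ℝ := Dmx - lam with hgdef
  have hgS : Δ * x t ≤ g * S := by
    have h := Finset.sum_nonneg hE5b
    rw [hE5] at h
    linarith only [h]
  have hgpos : 0 < g := by
    have h1 : 0 < Δ * x t := mul_pos (by linarith only [hΔ2r]) hxtpos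
    have h2 : 0 < g * S := lt_of_lt_of_le h1 hgS
    rcases mul_pos_iff.mp h2 with ⟨hg, -⟩ | ⟨-, hS'⟩
    · exact hg
    · linarith only [hS, hS']
  have hE6 : S ≤ (lam + N - Dmn) * x t := by
    have h := hE2ineq t
    have h2 : Dmn ≤ (transmission G t : ℝ) := hTrge t
    have h3 : 0 ≤ ((transmission G t : ℝ) - Dmn) * x t :=
      mul_nonneg (by linarith only [h2]) (hxnn t)
    nlinarith only [h, h3]
  have hK : Δ ≤ g * (N + (Dmx - Dmn) - g) := by
    have h1 : g * S ≤ g * ((lam + N - Dmn) * x t) := mul_le_mul_of_nonneg_left hE6 hgpos.le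
    have h2 : Δ * x t ≤ (g * (lam + N - Dmn)) * x t := by
      calc Δ * x t ≤ g * S := hgS
        _ ≤ (g * (lam + N - Dmn)) * x t := by rw [mul_assoc]; exact h1
    have h3 : Δ ≤ g * (lam + N - Dmn) := le_of_mul_le_mul_right h2 hxtpos
    have h4 : g * (lam + N - Dmn) = g * (N + (Dmx - Dmn) - g) := by rw [hgdef]; ring
    linarith only [h3, h4]
  have hδΔ : Dmx - Dmn ≤ Δ := by
    have h1 : ∑ v, (transmission G v : ℝ)
        = (transmission G t0 : ℝ) + ∑ v ∈ Finset.univ.erase t0, (transmission G v : ℝ) :=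
      (Finset.add_sum_erase _ _ (Finset.mem_univ t0)).symm
    have h2 : ∑ v ∈ Finset.univ.erase t0, (transmission G v : ℝ)
        ≤ ((Finset.univ.erase t0).card : ℝ) * Dmx := by
      rw [← nsmul_eq_mul]
      exact Finset.sum_le_card_nsmul _ _ _ (fun v _ => hTrle v)
    rw [hcard_erase t0] at h2
    rw [hΔdef]
    rw [h1, hTrt0]
    nlinarith only [h2]
  -- the case δ ≥ 3 is impossible when g ≤ ε
  have hδbig : g ≤ ε → Dmx - Dmn ≤ 2 := by
    intro hgle
    by_contra hδ3
    push_neg at hδ3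
    have hg1 : g < 1 := lt_of_le_of_lt hgle hεlt1
    have hδnat : Dmin G + 2 < Dmax G := by
      have hr : (Dmin G : ℝ) + 2 < (Dmax G : ℝ) := by
        rw [← hDmxdef, ← hDmndef]; linarith
      exact_mod_cast hr
    have hδ3' : (3:ℝ) ≤ Dmx - Dmn := by
      rw [hDmxdef, hDmndef]
      have : (Dmin G : ℝ) + 3 ≤ (Dmax G : ℝ) := by exact_mod_cast hδnat
      linarith
    have hK2 : Dmx - Dmn ≤ g * (N + (Dmx - Dmn) - g) := le_trans hδΔ hK
    have h1 : 3 * (1 - g) ≤ g * N := by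
      nlinarith only [hK2, mul_nonneg (by linarith only [hδ3'] : (0:ℝ) ≤ (Dmx - Dmn) - 3)
        (by linarith only [hg1] : (0:ℝ) ≤ 1 - g), sq_nonneg g]
    have h2 : 3 ≤ ε * (N + 3) := by
      have hm : 0 ≤ (ε - g) * (N + 3) :=
        mul_nonneg (by linarith only [hgle]) (by linarith only [hN4])
      nlinarith only [h1, hm]
    have hεsmall : ε * (N + 1) < 2 := by
      have hm : 0 < ε * (1 - ε) := mul_pos hεpos (by linarith only [hεlt1])
      nlinarith only [hε2, hm]
    have hm2 : 0 ≤ ε * (N - 4) := mul_nonneg hεpos.le (by linarith only [hN4])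
    nlinarith only [h2, hεsmall, hm2]
  constructor
  · -- the inequality
    by_contra hc
    push_neg at hc
    have hgle : g ≤ ε := hc.le
    have hδ2 := hδbig hgle
    have hKK : Δ ≤ g * (N + 2 - g) := by
      have hm : 0 ≤ g * (2 - (Dmx - Dmn)) := mul_nonneg hgpos.le (by linarith only [hδ2])
      nlinarith only [hK, hm]
    have hprod : 0 < (ε - g) * (N + 2 - ε - g) :=
      mul_pos (sub_pos.mpr hc) (by linarith only [hεlt1, hN4, hc, hgpos])
    nlinarith only [hΔ2r, hε2, hKK, hprod]
  constructor
  · -- equality implies DVDR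
    intro heq
    have hgle : g ≤ ε := le_of_eq heq
    have hδ2 := hδbig hgle
    have hlamg : lam = Dmx - g := by rw [hgdef]; ring
    have hδle2ℕ : Dmax G ≤ Dmin G + 2 := by
      have hr : (Dmin G : ℝ) + 2 ≥ (Dmax G : ℝ) := by rw [← hDmxdef, ← hDmndef]; linarith
      exact_mod_cast hr
    have hδ1false : Dmax G ≠ Dmin G + 1 := by
      intro h1
      have hr : Dmx = Dmn + 1 := by rw [hDmxdef, hDmndef]; exact_mod_cast h1
      have hK1 : Δ ≤ g * (N + 1 - g) := by
        have he : N + (Dmx - Dmn) - g = N + 1 - g := by rw [hr]; ring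
        rw [← he]; exact hK
      rw [heq] at hK1
      nlinarith only [hK1, hε2, hεpos, hΔ2r]
    have hδeq : Dmax G = Dmin G + 2 := by omega
    have hδr : Dmx = Dmn + 2 := by rw [hDmxdef, hDmndef]; exact_mod_cast hδeq
    have hKg : Δ ≤ g * (N + 2 - g) := by
      have he : N + (Dmx - Dmn) - g = N + 2 - g := by rw [hδr]; ring
      rw [← he]; exact hK
    have hg2 : g * (N + 2 - g) = 2 := by rw [heq]; exact hε2
    have hΔeq : Δ = 2 := le_antisymm (by linarith) hΔ2r
    have hglam2 : g * (lam + N - Dmn) = 2 := by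
      rw [hlamg, hδr]; linear_combination hg2
    have hchain1 : g * S = Δ * x t := by
      have hup : g * S ≤ 2 * x t := by
        calc g * S ≤ g * ((lam + N - Dmn) * x t) := mul_le_mul_of_nonneg_left hE6 hgpos.le
          _ = (g * (lam + N - Dmn)) * x t := by ring
          _ = 2 * x t := by rw [hglam2]
      have hlow : 2 * x t ≤ g * S := by rw [← hΔeq]; exact hgS
      rw [hΔeq]
      linarith [hlow, hup]
    have hchain2 : S = (lam + N - Dmn) * x t := by
      apply le_antisymm hE6
      have hmul : g * ((lam + N - Dmn) * x t) = g * S := by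
        calc g * ((lam + N - Dmn) * x t) = (g * (lam + N - Dmn)) * x t := by ring
          _ = 2 * x t := by rw [hglam2]
          _ = Δ * x t := by rw [hΔeq]
          _ = g * S := hchain1.symm
      exact le_of_eq (mul_left_cancel₀ hgpos.ne' hmul)
    have hsum0 : ∑ v, (Dmx - (transmission G v : ℝ)) * (x v - x t) = 0 := by
      rw [hE5, ← hchain1]
      ring
    have hA1 := (Finset.sum_eq_zero_iff_of_nonneg hE5b).mp hsum0
    have hTrt : (transmission G t : ℝ) = Dmn := by
      have hRnn := Finset.sum_nonneg (hE2b t)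
      rw [hE2a t] at hRnn
      have hval : lam * x t - (S - x t) - ((transmission G t : ℝ) - (N - 1)) * x t
          = (Dmn - (transmission G t : ℝ)) * x t := by rw [hchain2]; ring
      rw [hval] at hRnn
      have h6 : Dmn ≤ (transmission G t : ℝ) := hTrge t
      nlinarith only [hRnn, h6, hxtpos]
    have hRt0 : ∑ u ∈ Finset.univ.erase t, ((G.dist t u : ℝ) - 1) * (x u - x t) = 0 := by
      rw [hE2a t, hTrt, hchain2]
      ring
    have hA2 := (Finset.sum_eq_zero_iff_of_nonneg (hE2b t)).mp hRt0
    have huniq : ∀ v, v ≠ t → (transmission G v : ℝ) = Dmx := by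
      intro v hv
      have hsplit : Δ = (Dmx - (transmission G t : ℝ))
          + ∑ u ∈ Finset.univ.erase t, (Dmx - (transmission G u : ℝ)) := by
        rw [hΔsum]
        exact (Finset.add_sum_erase _ _ (Finset.mem_univ t)).symm
      have htermt : Dmx - (transmission G t : ℝ) = 2 := by rw [hTrt, hδr]; ring
      have hrest : ∑ u ∈ Finset.univ.erase t, (Dmx - (transmission G u : ℝ)) = 0 := by
        rw [hΔeq] at hsplit
        linarith
      have hz := (Finset.sum_eq_zero_iff_of_nonneg
        (fun u _ => by linarith [hTrle u])).mp hrest v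
        (Finset.mem_erase.mpr ⟨hv, Finset.mem_univ v⟩)
      linarith
    have hstrict : ∀ u, u ≠ t → x t < x u := by
      intro u hu
      rcases eq_or_lt_of_le (hxt u) with he | h
      · exfalso
        have hRu := Finset.sum_nonneg (hE2b u)
        rw [hE2a u] at hRu
        rw [← he, huniq u hu, hchain2, hδr] at hRu
        nlinarith only [hRu, hxtpos]
      · exact h
    have hadj : ∀ u, u ≠ t → G.Adj t u := by
      intro u hu
      have h1 := hA2 u (Finset.mem_erase.mpr ⟨hu, Finset.mem_univ u⟩)
      have h2 : 0 < x u - x t := sub_pos.mpr (hstrict u hu)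
      have h3 : (G.dist t u : ℝ) = 1 := by
        rcases mul_eq_zero.mp h1 with h | h
        · linarith
        · exfalso; linarith
      have h4 : G.dist t u = 1 := by exact_mod_cast h3
      exact (SimpleGraph.dist_eq_one_iff_adj).mp h4
    have hTt : transmission G t = n - 1 := by
      have hd := dominating_transmission hG hadj t
      rw [neighborSet_eq_compl hadj, ncard_compl_singleton] at hd
      omega
    have hDminval : Dmin G = n - 1 := by
      have h1 : (transmission G t : ℝ) = (Dmin G : ℝ) := by rw [hTrt, hDmndef]
      have h2 : transmission G t = Dmin G := by exact_mod_cast h1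
      omega
    have hTw : ∀ w, w ≠ t → transmission G w = n + 1 := by
      intro w hw
      have h1 : (transmission G w : ℝ) = (Dmax G : ℝ) := by rw [huniq w hw, hDmxdef]
      have h2 : transmission G w = Dmax G := by exact_mod_cast h1
      omega
    have hdegw : ∀ w, w ≠ t → (G.neighborSet w).ncard = n - 3 := by
      intro w hw
      have hd := dominating_transmission hG hadj w
      rw [hTw w hw] at hd
      omega
    refine ⟨hG, t, ?_, ?_⟩
    · rw [neighborSet_eq_compl hadj, ncard_compl_singleton]
    · intro w
      have hwne : (w : Fin n) ≠ t := by
        have h := w.2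
        simp only [Set.mem_compl_iff, Set.mem_singleton_iff] at h
        exact h
      rw [induce_neighbor_ncard, neighbor_ncard_sub_one ((hadj w hwne).symm), hdegw _ hwne]
      omega
  · -- DVDR implies equality
    intro hD
    have hmain := dvdr_eq G hG hn4 hD
    rw [hgdef, hεdef, hsqdef, hNdef, hDmxdef, hlamdef]
    exact hmain
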